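/- Let p > 3 be a prime and let G = Φ₁₉(1⁶) be the group of order p⁶ with presentation on generators α, α₁, α₂, β, β₁, β₂ and relations [α₁,α₂] = β, [β,α₁] = β₁, [β,α₂] = β₂, [α,α₁] = β₁, αᵖ = α₁ᵖ = α₂ᵖ = βᵖ = β₁ᵖ = β₂ᵖ = 1, with every commutator of a pair of generators not listed among these relations declared trivial. Then the Bogomolov multiplier B₀(G) is trivial. -/

import Mathlib

/-!
Φ₁₉(1⁶): relations [α₁,α₂]=β, [β,α₁]=β₁, [β,α₂]=β₂, [α,α₁]=β₁, all pth powers trivial.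
-/

namespace Stmt1

/-- The additive group `ℚ/ℤ`. -/
abbrev QZ : Type := ℚ ⧸ AddSubgroup.zmultiples (1 : ℚ)

/-- An inhomogeneous 2-cocycle on `G` with values in `ℚ/ℤ` (trivial `G`-action). -/
def IsTwoCocycle {G : Type} [Group G] (f : G → G → QZ) : Prop :=
  ∀ g h j : G, f h j - f (g * h) j + f g (h * j) - f g h = 0

/-- An inhomogeneous 2-coboundary on `G` with values in `ℚ/ℤ` (trivial `G`-action). -/
def IsTwoCoboundary {G : Type} [Group G] (f : G → G → QZ) : Prop :=
  ∃ c : G → QZ, ∀ g h : G, f g h = c h - c (g * h) + c g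

/-- A subgroup is bicyclic if it is abelian and generated by at most two elements
(equivalently, cyclic or a direct product of two cyclic groups). -/
def IsBicyclic {G : Type} [Group G] (A : Subgroup G) : Prop :=
  (∀ x y : A, x * y = y * x) ∧ ∃ a b : G, A = Subgroup.closure {a, b}

/-- The Bogomolov multiplier `B₀(G) ⊆ H²(G, ℚ/ℤ)` is trivial, phrased at the level of
2-cocycles: every 2-cocycle whose restriction to each bicyclic subgroup is a coboundary
(i.e. whose class restricts to zero on each bicyclic subgroup) is itself a coboundary
(i.e. its class is zero). -/
def BogomolovMultiplierIsTrivial (G : Type) [Group G] : Prop :=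
  ∀ f : G → G → QZ, IsTwoCocycle f →
    (∀ A : Subgroup G, IsBicyclic A → IsTwoCoboundary (fun a b : ↥A => f ↑a ↑b)) →
    IsTwoCoboundary f

/-- The Bogomolov multiplier `B₀(G) ⊆ H²(G, ℚ/ℤ)` is nontrivial, phrased at the level of
2-cocycles. -/
def BogomolovMultiplierIsNontrivial (G : Type) [Group G] : Prop :=
  ∃ f : G → G → QZ, IsTwoCocycle f ∧
    (∀ A : Subgroup G, IsBicyclic A → IsTwoCoboundary (fun a b : ↥A => f ↑a ↑b)) ∧
    ¬ IsTwoCoboundary f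

/-- The generators. -/
inductive Gen | a | a1 | a2 | b | b1 | b2

open FreeGroup

/-- The commutator `[x,y] = x⁻¹y⁻¹xy`. -/
def c (x y : FreeGroup Gen) : FreeGroup Gen := x⁻¹ * y⁻¹ * x * y

/-- The defining relators. -/
def rels (p : ℕ) : Set (FreeGroup Gen) :=
  { c (of .a1) (of .a2) * (of Gen.b)⁻¹,
    c (of .b) (of .a1) * (of Gen.b1)⁻¹,
    c (of .b) (of .a2) * (of Gen.b2)⁻¹,
    c (of .a) (of .a1) * (of Gen.b1)⁻¹,
    c (of .a) (of .a2),
    c (of .a) (of .b),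
    c (of .a) (of .b1),
    c (of .a) (of .b2),
    c (of .a1) (of .b1),
    c (of .a1) (of .b2),
    c (of .a2) (of .b1),
    c (of .a2) (of .b2),
    c (of .b) (of .b1),
    c (of .b) (of .b2),
    c (of .b1) (of .b2),
    (of Gen.a) ^ p,
    (of Gen.a1) ^ p,
    (of Gen.a2) ^ p,
    (of Gen.b) ^ p,
    (of Gen.b1) ^ p,
    (of Gen.b2) ^ p }

/-- Bundled normalized 2-cocycle data. -/
structure ExtD (G : Type) [Group G] where
  f : G → G → QZ
  coc : IsTwoCocycle f
  norm : f 1 1 = 0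

variable {G : Type} [Group G]

namespace ExtD
variable (D : ExtD G)

lemma f_one_left (g : G) : D.f 1 g = 0 := by
  have h := D.coc 1 1 g
  simp only [one_mul] at h
  calc D.f 1 g = (D.f 1 g - D.f 1 g + D.f 1 g - D.f 1 1) + D.f 1 1 := by abel
    _ = 0 := by rw [h, D.norm, zero_add]

lemma f_one_right (g : G) : D.f g 1 = 0 := by
  have h := D.coc g 1 1
  simp only [mul_one, one_mul] at h
  calc D.f g 1 = -(D.f 1 1 - D.f g 1 + D.f g 1 - D.f g 1) + D.f 1 1 := by abel
    _ = 0 := by rw [h, D.norm, neg_zero, zero_add]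

lemma f_inv_comm (g : G) : D.f g⁻¹ g = D.f g g⁻¹ := by
  have h := D.coc g g⁻¹ g
  rw [mul_inv_cancel, inv_mul_cancel, D.f_one_left, D.f_one_right] at h
  calc D.f g⁻¹ g = (D.f g⁻¹ g - 0 + 0 - D.f g g⁻¹) + D.f g g⁻¹ := by abel
    _ = D.f g g⁻¹ := by rw [h, zero_add]

end ExtD

/-- The central extension of `G` by `ℚ/ℤ` determined by the cocycle. -/
@[ext] structure Ext (D : ExtD G) : Type where
  u : QZ
  v : G

namespace Ext

variable {D : ExtD G}

instance : Group (Ext D) where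
  mul x y := ⟨x.u + y.u + D.f x.v y.v, x.v * y.v⟩
  one := ⟨0, 1⟩
  inv x := ⟨-x.u - D.f x.v x.v⁻¹, x.v⁻¹⟩
  mul_assoc x y z := by
    have h := D.coc x.v y.v z.v
    refine Ext.ext ?_ (mul_assoc _ _ _)
    show (x.u + y.u + D.f x.v y.v) + z.u + D.f (x.v * y.v) z.v
        = x.u + (y.u + z.u + D.f y.v z.v) + D.f x.v (y.v * z.v)
    refine eq_of_sub_eq_zero ?_
    calc (x.u + y.u + D.f x.v y.v) + z.u + D.f (x.v * y.v) z.v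
          - (x.u + (y.u + z.u + D.f y.v z.v) + D.f x.v (y.v * z.v))
        = -(D.f y.v z.v - D.f (x.v * y.v) z.v + D.f x.v (y.v * z.v) - D.f x.v y.v) := by abel
      _ = 0 := by rw [h, neg_zero]
  one_mul x := by
    refine Ext.ext ?_ (one_mul _)
    show 0 + x.u + D.f 1 x.v = x.u
    rw [D.f_one_left]; abel
  mul_one x := by
    refine Ext.ext ?_ (mul_one _)
    show x.u + 0 + D.f x.v 1 = x.u
    rw [D.f_one_right]; abel
  inv_mul_cancel x := by
    refine Ext.ext ?_ (inv_mul_cancel _)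
    show (-x.u - D.f x.v x.v⁻¹) + x.u + D.f x.v⁻¹ x.v = 0
    rw [D.f_inv_comm]; abel

@[simp] lemma mul_u (x y : Ext D) : (x * y).u = x.u + y.u + D.f x.v y.v := rfl
@[simp] lemma mul_v (x y : Ext D) : (x * y).v = x.v * y.v := rfl
@[simp] lemma one_u : (1 : Ext D).u = 0 := rfl
@[simp] lemma one_v : (1 : Ext D).v = 1 := rfl
@[simp] lemma inv_u (x : Ext D) : (x⁻¹).u = -x.u - D.f x.v x.v⁻¹ := rfl
@[simp] lemma inv_v (x : Ext D) : (x⁻¹).v = x.v⁻¹ := rfl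

/-- Projection to `G` as a homomorphism. -/
def vhom : Ext D →* G := { toFun := Ext.v, map_one' := rfl, map_mul' := fun _ _ => rfl }

@[simp] lemma vhom_apply (x : Ext D) : vhom x = x.v := rfl

lemma scalar_comm (w : QZ) (x : Ext D) : (⟨w, 1⟩ : Ext D) * x = x * ⟨w, 1⟩ := by
  refine Ext.ext ?_ (by simp)
  show w + x.u + D.f 1 x.v = x.u + w + D.f x.v 1
  rw [D.f_one_left, D.f_one_right]; abel

lemma scalar_pow (w : QZ) (n : ℕ) : (⟨w, 1⟩ : Ext D) ^ n = ⟨n • w, 1⟩ := by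
  induction n with
  | zero => refine Ext.ext ?_ rfl; simp
  | succ n ih =>
    rw [pow_succ, ih]
    refine Ext.ext ?_ (by simp)
    show n • w + w + D.f 1 1 = (n + 1) • w
    rw [D.norm, succ_nsmul]; abel

end Ext

section QLemmas
variable {K : Type} [Group K]

def q (x y : K) : K := x⁻¹ * y⁻¹ * x * y

lemma q_one_right (x : K) : q x (1:K) = 1 := by simp [q]

lemma q_eq_one_of_comm {x y : K} (h : x * y = y * x) : q x y = 1 := by
  rw [q, show x⁻¹ * y⁻¹ * x * y = x⁻¹ * y⁻¹ * (x * y) from by group, h]; group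

lemma comm_of_q_eq_one {x y : K} (h : q x y = 1) : x * y = y * x := by
  have h2 : x * y = (y * x) * q x y := by rw [q]; group
  rw [h2, h, mul_one]

variable {G : Type} [Group G] {D : ExtD G}

namespace Ext

lemma q_v (x y : Ext D) : (q x y).v = q x.v y.v := rfl

lemma q_v_eq {x x' y y' : Ext D} (hx : x.v = x'.v) (hy : y.v = y'.v) :
    q x y = q x' y' := by
  refine Ext.ext ?_ ?_
  · simp only [q, mul_u, inv_u, mul_v, inv_v, hx, hy]
    abel
  · simp only [q_v, hx, hy]

/-- CP property: lifts of commuting elements commute, given the bicyclic coboundary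
hypothesis. -/
lemma cp (Hbi : ∀ A : Subgroup G, IsBicyclic A →
      IsTwoCoboundary (fun a b : ↥A => D.f ↑a ↑b))
    (x y : Ext D) (hxy : x.v * y.v = y.v * x.v) : q x y = 1 := by
  set A := Subgroup.closure ({x.v, y.v} : Set G) with hA
  have hxA : x.v ∈ A := Subgroup.subset_closure (by simp)
  have hyA : y.v ∈ A := Subgroup.subset_closure (by simp)
  have habel : ∀ a b : A, a * b = b * a := by
    rintro ⟨a, ha⟩ ⟨b, hb⟩
    have key : a * b = b * a := by
      induction ha, hb using Subgroup.closure_induction₂ with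
      | mem g h hg hh =>
        rcases hg with rfl | hg <;> rcases hh with rfl | hh
        · rfl
        · rw [Set.mem_singleton_iff] at hh; subst hh; exact hxy
        · rw [Set.mem_singleton_iff] at hg; subst hg; exact hxy.symm
        · rw [Set.mem_singleton_iff] at hg hh; subst hg; subst hh; rfl
      | one_left g hg => simp
      | one_right g hg => simp
      | mul_left g h k hg hh hk ih1 ih2 =>
        exact ((show Commute g k from ih1).mul_left (show Commute h k from ih2)).eq
      | mul_right g h k hg hh hk ih1 ih2 =>
        exact ((show Commute k g from ih1).mul_right (show Commute k h from ih2)).eq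
      | inv_left g h hg hh ih => exact (show Commute g h from ih).inv_left.eq
      | inv_right g h hg hh ih => exact (show Commute g h from ih).inv_right.eq
    exact Subtype.ext (by simpa using key)
  obtain ⟨cc, hcc⟩ := Hbi A ⟨habel, x.v, y.v, hA⟩
  have hc1 : cc 1 = 0 := by
    have h := hcc 1 1
    simp only [OneMemClass.coe_one, mul_one] at h
    rw [D.norm] at h
    have h2 : cc 1 - cc 1 + cc 1 = cc 1 := by abel
    rw [h2] at h
    exact h.symm
  -- the splitting homomorphism over A
  let s : ↥A →* Ext D := MonoidHom.mk' (fun a => (⟨-cc a, ↑a⟩ : Ext D)) (by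
    intro a b
    refine Ext.ext ?_ rfl
    show -cc (a * b) = -cc a + -cc b + D.f ↑a ↑b
    have hab := hcc a b
    simp only [] at hab
    rw [hab]
    abel)
  have hs : ∀ a : ↥A, (s a) = (⟨-cc a, ↑a⟩ : Ext D) := fun a => rfl
  have hq1 : q (⟨x.v, hxA⟩ : ↥A) (⟨y.v, hyA⟩ : ↥A) = 1 := by
    apply q_eq_one_of_comm
    exact habel _ _
  have hqs : q (s ⟨x.v, hxA⟩) (s ⟨y.v, hyA⟩) = 1 := by
    have : q (s ⟨x.v, hxA⟩) (s ⟨y.v, hyA⟩) = s (q ⟨x.v, hxA⟩ ⟨y.v, hyA⟩) := by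
      simp [q, _root_.map_mul, _root_.map_inv]
    rw [this, hq1, _root_.map_one]
  calc q x y = q (s ⟨x.v, hxA⟩) (s ⟨y.v, hyA⟩) := q_v_eq rfl rfl
    _ = 1 := hqs

lemma central (Hbi : ∀ A : Subgroup G, IsBicyclic A →
      IsTwoCoboundary (fun a b : ↥A => D.f ↑a ↑b))
    (x : Ext D) (hx : ∀ g : G, x.v * g = g * x.v) (z : Ext D) : x * z = z * x :=
  comm_of_q_eq_one (cp Hbi x z (hx z.v))

lemma exists_good_lift {p : ℕ} (hp0 : p ≠ 0) (g : G) (hg : g ^ p = 1) :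
    ∃ x : Ext D, x.v = g ∧ x ^ p = 1 := by
  set t : QZ := (((⟨0, g⟩ : Ext D)) ^ p).u with ht
  have hv : (((⟨0, g⟩ : Ext D)) ^ p).v = 1 := by
    have : (((⟨0, g⟩ : Ext D)) ^ p).v = ((⟨0, g⟩ : Ext D)).v ^ p := by
      rw [← vhom_apply, ← vhom_apply, _root_.map_pow]
    rw [this]
    exact hg
  have hstep : ((⟨0, g⟩ : Ext D)) ^ p = ⟨t, 1⟩ := Ext.ext rfl hv
  obtain ⟨r, hr⟩ := QuotientAddGroup.mk'_surjective (AddSubgroup.zmultiples (1 : ℚ)) t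
  set u : QZ := QuotientAddGroup.mk' (AddSubgroup.zmultiples (1 : ℚ)) (-r / p) with hu
  have hpQ : (p:ℚ) ≠ 0 := Nat.cast_ne_zero.mpr hp0
  have hpu : p • u = -t := by
    rw [hu, ← _root_.map_nsmul, ← hr, ← _root_.map_neg]
    congr 1
    rw [nsmul_eq_mul]
    field_simp
  refine ⟨⟨u, g⟩, rfl, ?_⟩
  have hdecomp : (⟨u, g⟩ : Ext D) = (⟨u, 1⟩ : Ext D) * ⟨0, g⟩ := by
    refine Ext.ext ?_ (by simp)
    show u = u + 0 + D.f 1 g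
    rw [D.f_one_left]; abel
  have hcom : Commute ((⟨u, 1⟩ : Ext D)) ((⟨0, g⟩ : Ext D)) := scalar_comm u _
  rw [hdecomp, hcom.mul_pow, scalar_pow, hstep]
  refine Ext.ext ?_ (by simp)
  show p • u + t + D.f 1 1 = 0
  rw [D.norm, hpu]; abel

end Ext

end QLemmas

section QLemmas2
variable {K : Type} [Group K]

lemma conj_right {x y P : K} (h : q x y = P) : y⁻¹ * x * y = x * P := by
  rw [← h, q]; group

lemma q_mul_right (a b c : K) : q a (b * c) = q a c * (c⁻¹ * q a b * c) := by
  rw [q, q, q]; group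

lemma q_mul_inv_left {x y z P Q : K} (hP : q x z = P) (hQ : q y z = Q)
    (hPc : ∀ w, P * w = w * P) (hQc : ∀ w, Q * w = w * Q) :
    q (x * y⁻¹) z = P * Q⁻¹ := by
  have h1 : z⁻¹ * x * z = x * P := conj_right hP
  have h2 : z⁻¹ * y * z = y * Q := conj_right hQ
  have h2' : z⁻¹ * y⁻¹ * z = Q⁻¹ * y⁻¹ := by
    have h3 : (z⁻¹ * y * z)⁻¹ = (y * Q)⁻¹ := by rw [h2]
    calc z⁻¹ * y⁻¹ * z = (z⁻¹ * y * z)⁻¹ := by group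
      _ = (y * Q)⁻¹ := h3
      _ = Q⁻¹ * y⁻¹ := by group
  have hQinv : ∀ w, Q⁻¹ * w = w * Q⁻¹ := by
    intro w
    have : Commute Q w := hQc w
    exact (this.inv_left).eq
  calc q (x * y⁻¹) z = y * (x⁻¹ * (z⁻¹ * x * z) * (z⁻¹ * y⁻¹ * z)) := by rw [q]; group
    _ = y * (x⁻¹ * (x * P) * (Q⁻¹ * y⁻¹)) := by rw [h1, h2']
    _ = y * (P * Q⁻¹) * y⁻¹ := by group
    _ = P * Q⁻¹ := by
      rw [← mul_assoc, ← hPc y, mul_assoc P y Q⁻¹, ← hQinv y]; group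


lemma q_pow_aux {x y cb d : K} (hc : q x y = cb) (hd : q cb y = d)
    (hdc : ∀ z : K, d * z = z * d) (n : ℕ) :
    ∃ k : ℕ, q x (y ^ n) = cb ^ n * d ^ k ∧ 2 * k + n = n * n := by
  induction n with
  | zero => exact ⟨0, by simp [q_one_right], by simp⟩
  | succ n ih =>
    obtain ⟨k, hqk, hk⟩ := ih
    have hconj : y⁻¹ * cb * y = cb * d := conj_right hd
    have hdcm : Commute cb d := (hdc cb).symm
    have hdkc : ∀ w : K, d ^ k * w = w * d ^ k := fun w =>
      ((show Commute d w from hdc w).pow_left k).eq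
    refine ⟨n + k, ?_, ?_⟩
    · calc q x (y ^ (n+1)) = q x (y ^ n * y) := by rw [pow_succ]
        _ = q x y * (y⁻¹ * q x (y ^ n) * y) := q_mul_right _ _ _
        _ = cb * (y⁻¹ * (cb ^ n * d ^ k) * y) := by rw [hc, hqk]
        _ = cb * ((y⁻¹ * cb * y) ^ n * d ^ k) := by
              have h5 : (y⁻¹ * cb * y) ^ n = y⁻¹ * cb ^ n * y := by
                have := conj_pow (i := n) (a := y⁻¹) (b := cb)
                simpa using this
              rw [h5]
              rw [show y⁻¹ * (cb ^ n * d ^ k) * y = y⁻¹ * cb ^ n * (d ^ k * y) from by group,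
                hdkc y]
              group
        _ = cb * ((cb * d) ^ n * d ^ k) := by rw [hconj]
        _ = cb * (cb ^ n * d ^ n * d ^ k) := by rw [hdcm.mul_pow]
        _ = cb ^ (n+1) * d ^ (n + k) := by rw [pow_succ', pow_add]; simp [mul_assoc]
    · calc 2 * (n + k) + (n + 1) = (2 * k + n) + (2 * n + 1) := by ring
        _ = n * n + (2 * n + 1) := by rw [hk]
        _ = (n + 1) * (n + 1) := by ring

lemma q_pow_central {x y cb : K} (hc : q x y = cb) (hcb : ∀ z : K, cb * z = z * cb) (n : ℕ) :
    q x (y ^ n) = cb ^ n := by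
  obtain ⟨k, h1, _⟩ := q_pow_aux hc (q_eq_one_of_comm (hcb y)) (fun z => by simp) n
  simpa using h1


end QLemmas2

/-- Shorthand for the generators of the presented group. -/
private def gen (p : ℕ) (x : Gen) : PresentedGroup (rels p) := PresentedGroup.of x

set_option maxHeartbeats 1000000 in
private lemma core (p : ℕ) (hp : p.Prime) (h3 : 3 < p)
    (D : ExtD (PresentedGroup (rels p)))
    (Hbi : ∀ A : Subgroup (PresentedGroup (rels p)), IsBicyclic A →
      IsTwoCoboundary (fun a b : ↥A => D.f ↑a ↑b)) :
    IsTwoCoboundary D.f := by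
  have hp0 : p ≠ 0 := hp.ne_zero
  -- relators are trivial in the presented group
  have hrel : ∀ r ∈ rels p, PresentedGroup.mk (rels p) r = 1 := fun r hr =>
    (QuotientGroup.eq_one_iff r).mpr (Subgroup.subset_normalClosure hr)
  have hmk_c : ∀ x y : Gen, PresentedGroup.mk (rels p) (c (of x) (of y))
      = q (gen p x) (gen p y) := by
    intro x y
    simp only [c, q, _root_.map_mul, _root_.map_inv]
    rfl
  have hmk_pow : ∀ x : Gen, PresentedGroup.mk (rels p) ((of x) ^ p) = (gen p x) ^ p := by
    intro x
    simp only [_root_.map_pow]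
    rfl
  have R1 : q (gen p .a1) (gen p .a2) = gen p .b := by
    have h := hrel _ (show _ ∈ rels p from Or.inl rfl)
    rw [_root_.map_mul, _root_.map_inv, hmk_c] at h
    exact mul_inv_eq_one.mp h
  have R2 : q (gen p .b) (gen p .a1) = gen p .b1 := by
    have h := hrel _ (show _ ∈ rels p from Or.inr (Or.inl rfl))
    rw [_root_.map_mul, _root_.map_inv, hmk_c] at h
    exact mul_inv_eq_one.mp h
  have R3 : q (gen p .b) (gen p .a2) = gen p .b2 := by
    have h := hrel _ (show _ ∈ rels p from Or.inr (Or.inr (Or.inl rfl)))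
    rw [_root_.map_mul, _root_.map_inv, hmk_c] at h
    exact mul_inv_eq_one.mp h
  have R4 : q (gen p .a) (gen p .a1) = gen p .b1 := by
    have h := hrel _ (show _ ∈ rels p from Or.inr (Or.inr (Or.inr (Or.inl rfl))))
    rw [_root_.map_mul, _root_.map_inv, hmk_c] at h
    exact mul_inv_eq_one.mp h
  have C5 : gen p .a * gen p .a2 = gen p .a2 * gen p .a := by
    have h := hrel _ (show _ ∈ rels p from Or.inr (Or.inr (Or.inr (Or.inr (Or.inl rfl)))))
    rw [hmk_c] at h
    exact comm_of_q_eq_one h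
  have C6 : gen p .a * gen p .b = gen p .b * gen p .a := by
    have h := hrel _ (show _ ∈ rels p from Or.inr (Or.inr (Or.inr (Or.inr (Or.inr (Or.inl rfl))))))
    rw [hmk_c] at h
    exact comm_of_q_eq_one h
  have C7 : gen p .a * gen p .b1 = gen p .b1 * gen p .a := by
    have h := hrel _ (show _ ∈ rels p from Or.inr (Or.inr (Or.inr (Or.inr (Or.inr (Or.inr (Or.inl rfl)))))))
    rw [hmk_c] at h
    exact comm_of_q_eq_one h
  have C8 : gen p .a * gen p .b2 = gen p .b2 * gen p .a := by
    have h := hrel _ (show _ ∈ rels p from Or.inr (Or.inr (Or.inr (Or.inr (Or.inr (Or.inr (Or.inr (Or.inl rfl))))))))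
    rw [hmk_c] at h
    exact comm_of_q_eq_one h
  have C9 : gen p .a1 * gen p .b1 = gen p .b1 * gen p .a1 := by
    have h := hrel _ (show _ ∈ rels p from Or.inr (Or.inr (Or.inr (Or.inr (Or.inr (Or.inr (Or.inr (Or.inr (Or.inl rfl)))))))))
    rw [hmk_c] at h
    exact comm_of_q_eq_one h
  have C10 : gen p .a1 * gen p .b2 = gen p .b2 * gen p .a1 := by
    have h := hrel _ (show _ ∈ rels p from Or.inr (Or.inr (Or.inr (Or.inr (Or.inr (Or.inr (Or.inr (Or.inr (Or.inr (Or.inl rfl))))))))))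
    rw [hmk_c] at h
    exact comm_of_q_eq_one h
  have C11 : gen p .a2 * gen p .b1 = gen p .b1 * gen p .a2 := by
    have h := hrel _ (show _ ∈ rels p from Or.inr (Or.inr (Or.inr (Or.inr (Or.inr (Or.inr (Or.inr (Or.inr (Or.inr (Or.inr (Or.inl rfl)))))))))))
    rw [hmk_c] at h
    exact comm_of_q_eq_one h
  have C12 : gen p .a2 * gen p .b2 = gen p .b2 * gen p .a2 := by
    have h := hrel _ (show _ ∈ rels p from Or.inr (Or.inr (Or.inr (Or.inr (Or.inr (Or.inr (Or.inr (Or.inr (Or.inr (Or.inr (Or.inr (Or.inl rfl))))))))))))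
    rw [hmk_c] at h
    exact comm_of_q_eq_one h
  have C13 : gen p .b * gen p .b1 = gen p .b1 * gen p .b := by
    have h := hrel _ (show _ ∈ rels p from Or.inr (Or.inr (Or.inr (Or.inr (Or.inr (Or.inr (Or.inr (Or.inr (Or.inr (Or.inr (Or.inr (Or.inr (Or.inl rfl)))))))))))))
    rw [hmk_c] at h
    exact comm_of_q_eq_one h
  have C14 : gen p .b * gen p .b2 = gen p .b2 * gen p .b := by
    have h := hrel _ (show _ ∈ rels p from Or.inr (Or.inr (Or.inr (Or.inr (Or.inr (Or.inr (Or.inr (Or.inr (Or.inr (Or.inr (Or.inr (Or.inr (Or.inr (Or.inl rfl))))))))))))))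
    rw [hmk_c] at h
    exact comm_of_q_eq_one h
  have C15 : gen p .b1 * gen p .b2 = gen p .b2 * gen p .b1 := by
    have h := hrel _ (show _ ∈ rels p from Or.inr (Or.inr (Or.inr (Or.inr (Or.inr (Or.inr (Or.inr (Or.inr (Or.inr (Or.inr (Or.inr (Or.inr (Or.inr (Or.inr (Or.inl rfl)))))))))))))))
    rw [hmk_c] at h
    exact comm_of_q_eq_one h
  have P16 : (gen p .a) ^ p = 1 := by
    have h := hrel _ (show _ ∈ rels p from Or.inr (Or.inr (Or.inr (Or.inr (Or.inr (Or.inr (Or.inr (Or.inr (Or.inr (Or.inr (Or.inr (Or.inr (Or.inr (Or.inr (Or.inr (Or.inl rfl))))))))))))))))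
    rw [hmk_pow] at h
    exact h
  have P17 : (gen p .a1) ^ p = 1 := by
    have h := hrel _ (show _ ∈ rels p from Or.inr (Or.inr (Or.inr (Or.inr (Or.inr (Or.inr (Or.inr (Or.inr (Or.inr (Or.inr (Or.inr (Or.inr (Or.inr (Or.inr (Or.inr (Or.inr (Or.inl rfl)))))))))))))))))
    rw [hmk_pow] at h
    exact h
  have P18 : (gen p .a2) ^ p = 1 := by
    have h := hrel _ (show _ ∈ rels p from Or.inr (Or.inr (Or.inr (Or.inr (Or.inr (Or.inr (Or.inr (Or.inr (Or.inr (Or.inr (Or.inr (Or.inr (Or.inr (Or.inr (Or.inr (Or.inr (Or.inr (Or.inl rfl))))))))))))))))))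
    rw [hmk_pow] at h
    exact h
  have P19 : (gen p .b) ^ p = 1 := by
    have h := hrel _ (show _ ∈ rels p from Or.inr (Or.inr (Or.inr (Or.inr (Or.inr (Or.inr (Or.inr (Or.inr (Or.inr (Or.inr (Or.inr (Or.inr (Or.inr (Or.inr (Or.inr (Or.inr (Or.inr (Or.inr (Or.inl rfl)))))))))))))))))))
    rw [hmk_pow] at h
    exact h
  have P20 : (gen p .b1) ^ p = 1 := by
    have h := hrel _ (show _ ∈ rels p from Or.inr (Or.inr (Or.inr (Or.inr (Or.inr (Or.inr (Or.inr (Or.inr (Or.inr (Or.inr (Or.inr (Or.inr (Or.inr (Or.inr (Or.inr (Or.inr (Or.inr (Or.inr (Or.inr (Or.inl rfl))))))))))))))))))))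
    rw [hmk_pow] at h
    exact h
  have P21 : (gen p .b2) ^ p = 1 := by
    have h := hrel _ (show _ ∈ rels p from Or.inr (Or.inr (Or.inr (Or.inr (Or.inr (Or.inr (Or.inr (Or.inr (Or.inr (Or.inr (Or.inr (Or.inr (Or.inr (Or.inr (Or.inr (Or.inr (Or.inr (Or.inr (Or.inr (Or.inr (rfl)))))))))))))))))))))
    rw [hmk_pow] at h
    exact h
  -- β₁ and β₂ are central in G
  have hb1c : ∀ g : PresentedGroup (rels p), gen p .b1 * g = g * gen p .b1 := by
    have key : ∀ w : FreeGroup Gen, Commute (gen p .b1) (PresentedGroup.mk (rels p) w) := by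
      intro w
      induction w using FreeGroup.induction_on with
      | C1 => rw [_root_.map_one]; exact Commute.one_right _
      | of x =>
        cases x
        · exact (show Commute (gen p .a) (gen p .b1) from C7).symm
        · exact (show Commute (gen p .a1) (gen p .b1) from C9).symm
        · exact (show Commute (gen p .a2) (gen p .b1) from C11).symm
        · exact (show Commute (gen p .b) (gen p .b1) from C13).symm
        · exact Commute.refl _
        · exact (show Commute (gen p .b1) (gen p .b2) from C15)
      | inv_of x ih => rw [_root_.map_inv]; exact ih.inv_right
      | mul x y ihx ihy => rw [_root_.map_mul]; exact ihx.mul_right ihy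
    intro g
    obtain ⟨w, rfl⟩ := PresentedGroup.mk_surjective (rels p) g
    exact (key w).eq
  have hb2c : ∀ g : PresentedGroup (rels p), gen p .b2 * g = g * gen p .b2 := by
    have key : ∀ w : FreeGroup Gen, Commute (gen p .b2) (PresentedGroup.mk (rels p) w) := by
      intro w
      induction w using FreeGroup.induction_on with
      | C1 => rw [_root_.map_one]; exact Commute.one_right _
      | of x =>
        cases x
        · exact (show Commute (gen p .a) (gen p .b2) from C8).symm
        · exact (show Commute (gen p .a1) (gen p .b2) from C10).symm
        · exact (show Commute (gen p .a2) (gen p .b2) from C12).symm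
        · exact (show Commute (gen p .b) (gen p .b2) from C14).symm
        · exact (show Commute (gen p .b1) (gen p .b2) from C15).symm
        · exact Commute.refl _
      | inv_of x ih => rw [_root_.map_inv]; exact ih.inv_right
      | mul x y ihx ihy => rw [_root_.map_mul]; exact ihx.mul_right ihy
    intro g
    obtain ⟨w, rfl⟩ := PresentedGroup.mk_surjective (rels p) g
    exact (key w).eq
  -- the key commuting pair α·β⁻¹ with α₁
  have hab_comm : (gen p .a * (gen p .b)⁻¹) * gen p .a1
      = gen p .a1 * (gen p .a * (gen p .b)⁻¹) := by
    apply comm_of_q_eq_one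
    rw [q_mul_inv_left R4 R2 hb1c hb1c, mul_inv_cancel]
  -- choose lifts of the three main generators with trivial p-th power
  obtain ⟨A, hAv, hAp⟩ := Ext.exists_good_lift (D := D) hp0 (gen p .a) P16
  obtain ⟨A1, hA1v, hA1p⟩ := Ext.exists_good_lift (D := D) hp0 (gen p .a1) P17
  obtain ⟨A2, hA2v, hA2p⟩ := Ext.exists_good_lift (D := D) hp0 (gen p .a2) P18
  -- the derived lifts
  set B : Ext D := q A1 A2 with hB
  set B1 : Ext D := q B A1 with hB1
  set B2 : Ext D := q B A2 with hB2
  have hBv : B.v = gen p .b := by rw [hB, Ext.q_v, hA1v, hA2v, R1]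
  have hB1v : B1.v = gen p .b1 := by rw [hB1, Ext.q_v, hBv, hA1v, R2]
  have hB2v : B2.v = gen p .b2 := by rw [hB2, Ext.q_v, hBv, hA2v, R3]
  -- central lifts
  have hB1c : ∀ z : Ext D, B1 * z = z * B1 :=
    Ext.central Hbi B1 (fun g => by rw [hB1v]; exact hb1c g)
  have hB2c : ∀ z : Ext D, B2 * z = z * B2 :=
    Ext.central Hbi B2 (fun g => by rw [hB2v]; exact hb2c g)
  have hPc : ∀ z : Ext D, (q A A1) * z = z * (q A A1) :=
    Ext.central Hbi (q A A1)
      (fun g => by rw [Ext.q_v, hAv, hA1v, R4]; exact hb1c g)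
  -- the extra commutator relation [A,A₁] = B₁
  have E8 : q A A1 = B1 := by
    have h0 : (A * B⁻¹).v * A1.v = A1.v * (A * B⁻¹).v := by
      rw [Ext.mul_v, Ext.inv_v, hAv, hBv, hA1v]
      exact hab_comm
    have h := Ext.cp Hbi (A * B⁻¹) A1 h0
    have h2 := q_mul_inv_left (x := A) (y := B) (z := A1) rfl hB1.symm hPc hB1c
    rw [h] at h2
    exact (mul_inv_eq_one.mp h2.symm)
  -- p-th powers of the derived lifts
  have E5 : B1 ^ p = 1 := by
    have h := q_pow_central (x := B) (y := A1) hB1.symm hB1c p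
    rw [hA1p, q_one_right] at h
    exact h.symm
  have E6 : B2 ^ p = 1 := by
    have h := q_pow_central (x := B) (y := A2) hB2.symm hB2c p
    rw [hA2p, q_one_right] at h
    exact h.symm
  have E7 : B ^ p = 1 := by
    obtain ⟨k, hk1, hk2⟩ := q_pow_aux (x := A1) (y := A2)
      hB.symm hB2.symm hB2c p
    rw [hA2p, q_one_right] at hk1
    obtain ⟨m, rfl⟩ : ∃ m, p = m + 1 := ⟨p - 1, by omega⟩
    have e1 : (m+1) * (m+1) = (m+1) * m + (m+1) := by ring
    have e2 : 2 * k = (m+1) * m := by linarith [hk2, e1]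
    have hdvd : (m+1) ∣ k := by
      rcases (Nat.Prime.dvd_mul hp).mp ⟨m, e2⟩ with h | h
      · exact absurd (Nat.le_of_dvd (by norm_num) h) (by omega)
      · exact h
    obtain ⟨l, rfl⟩ := hdvd
    have hB2l : B2 ^ ((m+1) * l) = 1 := by rw [pow_mul, E6, one_pow]
    rw [hB2l, mul_one] at hk1
    exact hk1.symm
  -- the assignment of generators
  set F : Gen → Ext D := fun x => match x with
    | .a => A | .a1 => A1 | .a2 => A2 | .b => B | .b1 => B1 | .b2 => B2 with hFdef
  have hFa : F Gen.a = A := rfl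
  have hFa1 : F Gen.a1 = A1 := rfl
  have hFa2 : F Gen.a2 = A2 := rfl
  have hFb : F Gen.b = B := rfl
  have hFb1 : F Gen.b1 = B1 := rfl
  have hFb2 : F Gen.b2 = B2 := rfl
  -- all relators hold on the nose in the extension
  have hF : ∀ r ∈ rels p, FreeGroup.lift F r = 1 := by
    intro r hr
    simp only [rels, Set.mem_insert_iff, Set.mem_singleton_iff] at hr
    rcases hr with rfl|rfl|rfl|rfl|rfl|rfl|rfl|rfl|rfl|rfl|rfl|rfl|rfl|rfl|rfl|rfl|rfl|rfl|rfl|rfl|rfl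
    · simp only [c, _root_.map_mul, _root_.map_inv, FreeGroup.lift_apply_of, hFa1, hFa2, hFb]
      rw [show A1⁻¹ * A2⁻¹ * A1 * A2 * B⁻¹ = q A1 A2 * B⁻¹ from rfl, ← hB, mul_inv_cancel]
    · simp only [c, _root_.map_mul, _root_.map_inv, FreeGroup.lift_apply_of, hFb, hFa1, hFb1]
      rw [show B⁻¹ * A1⁻¹ * B * A1 * B1⁻¹ = q B A1 * B1⁻¹ from rfl, ← hB1, mul_inv_cancel]
    · simp only [c, _root_.map_mul, _root_.map_inv, FreeGroup.lift_apply_of, hFb, hFa2, hFb2]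
      rw [show B⁻¹ * A2⁻¹ * B * A2 * B2⁻¹ = q B A2 * B2⁻¹ from rfl, ← hB2, mul_inv_cancel]
    · simp only [c, _root_.map_mul, _root_.map_inv, FreeGroup.lift_apply_of, hFa, hFa1, hFb1]
      rw [show A⁻¹ * A1⁻¹ * A * A1 * B1⁻¹ = q A A1 * B1⁻¹ from rfl, E8, mul_inv_cancel]
    · simp only [c, _root_.map_mul, _root_.map_inv, FreeGroup.lift_apply_of, hFa, hFa2]
      rw [show A⁻¹ * A2⁻¹ * A * A2 = q A A2 from rfl]
      exact Ext.cp Hbi A A2 (by rw [hAv, hA2v]; exact C5)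
    · simp only [c, _root_.map_mul, _root_.map_inv, FreeGroup.lift_apply_of, hFa, hFb]
      rw [show A⁻¹ * B⁻¹ * A * B = q A B from rfl]
      exact Ext.cp Hbi A B (by rw [hAv, hBv]; exact C6)
    · simp only [c, _root_.map_mul, _root_.map_inv, FreeGroup.lift_apply_of, hFa, hFb1]
      rw [show A⁻¹ * B1⁻¹ * A * B1 = q A B1 from rfl]
      exact Ext.cp Hbi A B1 (by rw [hAv, hB1v]; exact C7)
    · simp only [c, _root_.map_mul, _root_.map_inv, FreeGroup.lift_apply_of, hFa, hFb2]
      rw [show A⁻¹ * B2⁻¹ * A * B2 = q A B2 from rfl]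
      exact Ext.cp Hbi A B2 (by rw [hAv, hB2v]; exact C8)
    · simp only [c, _root_.map_mul, _root_.map_inv, FreeGroup.lift_apply_of, hFa1, hFb1]
      rw [show A1⁻¹ * B1⁻¹ * A1 * B1 = q A1 B1 from rfl]
      exact Ext.cp Hbi A1 B1 (by rw [hA1v, hB1v]; exact C9)
    · simp only [c, _root_.map_mul, _root_.map_inv, FreeGroup.lift_apply_of, hFa1, hFb2]
      rw [show A1⁻¹ * B2⁻¹ * A1 * B2 = q A1 B2 from rfl]
      exact Ext.cp Hbi A1 B2 (by rw [hA1v, hB2v]; exact C10)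
    · simp only [c, _root_.map_mul, _root_.map_inv, FreeGroup.lift_apply_of, hFa2, hFb1]
      rw [show A2⁻¹ * B1⁻¹ * A2 * B1 = q A2 B1 from rfl]
      exact Ext.cp Hbi A2 B1 (by rw [hA2v, hB1v]; exact C11)
    · simp only [c, _root_.map_mul, _root_.map_inv, FreeGroup.lift_apply_of, hFa2, hFb2]
      rw [show A2⁻¹ * B2⁻¹ * A2 * B2 = q A2 B2 from rfl]
      exact Ext.cp Hbi A2 B2 (by rw [hA2v, hB2v]; exact C12)
    · simp only [c, _root_.map_mul, _root_.map_inv, FreeGroup.lift_apply_of, hFb, hFb1]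
      rw [show B⁻¹ * B1⁻¹ * B * B1 = q B B1 from rfl]
      exact Ext.cp Hbi B B1 (by rw [hBv, hB1v]; exact C13)
    · simp only [c, _root_.map_mul, _root_.map_inv, FreeGroup.lift_apply_of, hFb, hFb2]
      rw [show B⁻¹ * B2⁻¹ * B * B2 = q B B2 from rfl]
      exact Ext.cp Hbi B B2 (by rw [hBv, hB2v]; exact C14)
    · simp only [c, _root_.map_mul, _root_.map_inv, FreeGroup.lift_apply_of, hFb1, hFb2]
      rw [show B1⁻¹ * B2⁻¹ * B1 * B2 = q B1 B2 from rfl]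
      exact Ext.cp Hbi B1 B2 (by rw [hB1v, hB2v]; exact C15)
    · simp only [_root_.map_pow, FreeGroup.lift_apply_of, hFa]
      exact hAp
    · simp only [_root_.map_pow, FreeGroup.lift_apply_of, hFa1]
      exact hA1p
    · simp only [_root_.map_pow, FreeGroup.lift_apply_of, hFa2]
      exact hA2p
    · simp only [_root_.map_pow, FreeGroup.lift_apply_of, hFb]
      exact E7
    · simp only [_root_.map_pow, FreeGroup.lift_apply_of, hFb1]
      exact E5
    · simp only [_root_.map_pow, FreeGroup.lift_apply_of, hFb2]
      exact E6
  -- the splitting homomorphism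
  have hid : ∀ g : PresentedGroup (rels p), ((PresentedGroup.toGroup hF) g).v = g := by
    have hcomp : Ext.vhom.comp (PresentedGroup.toGroup hF)
        = MonoidHom.id (PresentedGroup (rels p)) := by
      apply PresentedGroup.ext
      intro x
      rw [MonoidHom.comp_apply, MonoidHom.id_apply, PresentedGroup.toGroup.of, Ext.vhom_apply]
      cases x
      · rw [hFa]; exact hAv
      · rw [hFa1]; exact hA1v
      · rw [hFa2]; exact hA2v
      · rw [hFb]; exact hBv
      · rw [hFb1]; exact hB1v
      · rw [hFb2]; exact hB2v
    intro g
    have h := DFunLike.congr_fun hcomp g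
    simpa using h
  -- conclude: D.f is a coboundary
  refine ⟨fun g => -((PresentedGroup.toGroup hF) g).u, ?_⟩
  intro g h
  have hmul := _root_.map_mul (PresentedGroup.toGroup hF) g h
  have hu : ((PresentedGroup.toGroup hF) (g * h)).u
      = ((PresentedGroup.toGroup hF) g).u + ((PresentedGroup.toGroup hF) h).u
        + D.f ((PresentedGroup.toGroup hF) g).v ((PresentedGroup.toGroup hF) h).v := by
    rw [hmul, Ext.mul_u]
  rw [hid g, hid h] at hu
  rw [show D.f g h = ((PresentedGroup.toGroup hF) (g * h)).u
      - ((PresentedGroup.toGroup hF) g).u - ((PresentedGroup.toGroup hF) h).u from by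
    rw [hu]; abel]
  beta_reduce
  abel

theorem bogomolov_trivial_Phi19 (p : ℕ) (hp : p.Prime) (h3 : 3 < p)
    (hcard : Nat.card (PresentedGroup (rels p)) = p ^ 6) :
    BogomolovMultiplierIsTrivial (PresentedGroup (rels p)) := by
  intro f hf hbi
  -- normalize the cocycle
  set f' : PresentedGroup (rels p) → PresentedGroup (rels p) → QZ :=
    fun g h => f g h - f 1 1 with hf'def
  have hf'coc : IsTwoCocycle f' := by
    intro g h j
    have h0 := hf g h j
    calc (f h j - f 1 1) - (f (g*h) j - f 1 1) + (f g (h*j) - f 1 1) - (f g h - f 1 1)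
        = f h j - f (g*h) j + f g (h*j) - f g h := by abel
      _ = 0 := h0
  have hnorm : f' 1 1 = 0 := by simp [hf'def]
  set D : ExtD (PresentedGroup (rels p)) := ⟨f', hf'coc, hnorm⟩ with hD
  have Hbi : ∀ A : Subgroup (PresentedGroup (rels p)), IsBicyclic A →
      IsTwoCoboundary (fun a b : ↥A => D.f ↑a ↑b) := by
    intro A hA
    obtain ⟨cc, hcc⟩ := hbi A hA
    refine ⟨fun a => cc a - f 1 1, ?_⟩
    intro g h
    have h0 := hcc g h
    simp only [] at h0 ⊢
    show f ↑g ↑h - f 1 1 = _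
    rw [h0]
    abel
  obtain ⟨cc, hcc⟩ := core p hp h3 D Hbi
  refine ⟨fun g => cc g + f 1 1, ?_⟩
  intro g h
  have h0 := hcc g h
  show f g h = _
  have h1 : f g h - f 1 1 = cc h - cc (g * h) + cc g := h0
  calc f g h = (f g h - f 1 1) + f 1 1 := by abel
    _ = (cc h - cc (g * h) + cc g) + f 1 1 := by rw [h1]
    _ = (cc h + f 1 1) - (cc (g*h) + f 1 1) + (cc g + f 1 1) := by abel

end Stmt1
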